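/- Let f : [0,∞) → ℝ be (k times differentiable with) f^{(k)}(x) → 0 as x → ∞, and suppose g : [0,∞) → ℝ satisfies g(x+1) - g(x) = f(x) for all x ≥ 0 together with another function h satisfying h(x+1) - h(x) = f(x) and g(0) = h(0). If additionally g - h is k times differentiable with (g-h)^{(k)} → 0 at infinity and g - h is periodic with period 1, then g = h. (Uniqueness part of the Dufresnoy–Pisot theorem: a function satisfying the difference equation f(x+1)-f(x)=g(x) with prescribed value at 0 and k-th derivative tending to 0 is unique.) -/

import Mathlib

open Filter Topology

private lemma aux_periodic_zero (k : ℕ) : ∀ (ψ : ℝ → ℝ), ContDiff ℝ k ψ →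
    (∀ x : ℝ, 0 ≤ x → ψ (x + 1) = ψ x) →
    Tendsto (iteratedDeriv k ψ) atTop (𝓝 0) →
    ∀ x : ℝ, 0 ≤ x → ψ x = ψ 0 := by
  induction k with
  | zero =>
    intro ψ _ hp ht x hx
    rw [iteratedDeriv_zero] at ht
    have key : ∀ y : ℝ, 0 ≤ y → ψ y = 0 := by
      intro y hy
      have h1 : ∀ n : ℕ, ψ (y + n) = ψ y := by
        intro n
        induction n with
        | zero => simp
        | succ n ih =>
          have := hp (y + n) (by positivity)
          push_cast
          rw [← add_assoc] at *
          rw [this, ih]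
      have h2 : Tendsto (fun n : ℕ => ψ (y + n)) atTop (𝓝 0) :=
        ht.comp (tendsto_atTop_add_const_left _ y tendsto_natCast_atTop_atTop)
      have h3 : Tendsto (fun _ : ℕ => ψ y) atTop (𝓝 0) := h2.congr h1
      exact tendsto_nhds_unique tendsto_const_nhds h3
    rw [key x hx, key 0 le_rfl]
  | succ k ih =>
    intro ψ hc hp ht x hx
    have hc2 : ContDiff ℝ ((k : WithTop ℕ∞) + 1) ψ := by exact_mod_cast hc
    obtain ⟨hdiff, -, hcd⟩ := contDiff_succ_iff_deriv.mp hc2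
    -- periodicity of deriv ψ on [0, ∞)
    have hpos : ∀ y : ℝ, 0 < y → deriv ψ (y + 1) = deriv ψ y := by
      intro y hy
      have heq : (fun z => ψ (z + 1)) =ᶠ[𝓝 y] ψ := by
        filter_upwards [Ioi_mem_nhds hy] with z hz using hp z hz.le
      have h := heq.deriv_eq
      rwa [deriv_comp_add_const] at h
    have hcont : Continuous (deriv ψ) := hcd.continuous
    have hp' : ∀ y : ℝ, 0 ≤ y → deriv ψ (y + 1) = deriv ψ y := by
      intro y hy
      rcases hy.lt_or_eq with h | h
      · exact hpos y h
      · subst h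
        have t1 : Tendsto (fun z => deriv ψ (z + 1)) (𝓝[>] (0:ℝ)) (𝓝 (deriv ψ (0 + 1))) :=
          ((hcont.comp (continuous_add_right 1)).tendsto 0).mono_left nhdsWithin_le_nhds
        have t2 : Tendsto (deriv ψ) (𝓝[>] (0:ℝ)) (𝓝 (deriv ψ 0)) :=
          (hcont.tendsto 0).mono_left nhdsWithin_le_nhds
        have t1' : Tendsto (deriv ψ) (𝓝[>] (0:ℝ)) (𝓝 (deriv ψ (0 + 1))) := by
          refine t1.congr' ?_
          filter_upwards [self_mem_nhdsWithin] with z hz using hpos z hz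
        exact tendsto_nhds_unique t1' t2
    have ht' : Tendsto (iteratedDeriv k (deriv ψ)) atTop (𝓝 0) := by
      rwa [iteratedDeriv_succ'] at ht
    have ihd : ∀ y : ℝ, 0 ≤ y → deriv ψ y = deriv ψ 0 := ih (deriv ψ) hcd hp' ht'
    -- MVT: deriv ψ 0 = 0
    have hψ10 : ψ 1 = ψ 0 := by simpa using hp 0 le_rfl
    obtain ⟨c, hc01, hslope⟩ := exists_deriv_eq_slope ψ (zero_lt_one)
      hdiff.continuous.continuousOn hdiff.differentiableOn
    have hc0 : deriv ψ 0 = 0 := by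
      rw [← ihd c hc01.1.le, hslope, hψ10]
      simp
    have hzero : ∀ y : ℝ, 0 ≤ y → deriv ψ y = 0 := fun y hy => (ihd y hy).trans hc0
    have hint : ∀ y ∈ interior (Set.Ici (0:ℝ)), deriv ψ y = 0 := by
      intro y hy
      rw [interior_Ici] at hy
      exact hzero y (le_of_lt hy)
    have hmono := monotoneOn_of_deriv_nonneg (convex_Ici 0) hdiff.continuous.continuousOn
      hdiff.differentiableOn (fun y hy => (hint y hy).ge)
    have hanti := antitoneOn_of_deriv_nonpos (convex_Ici 0) hdiff.continuous.continuousOn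
      hdiff.differentiableOn (fun y hy => (hint y hy).le)
    exact le_antisymm (hanti Set.self_mem_Ici hx hx) (hmono Set.self_mem_Ici hx hx)

theorem stmt10 (k : ℕ) (g f₁ f₂ : ℝ → ℝ)
    (h1 : ∀ x : ℝ, 0 ≤ x → f₁ (x + 1) - f₁ x = g x)
    (h2 : ∀ x : ℝ, 0 ≤ x → f₂ (x + 1) - f₂ x = g x)
    (h0 : f₁ 0 = f₂ 0)
    (hd1 : ContDiff ℝ k f₁) (hd2 : ContDiff ℝ k f₂)
    (ht1 : Tendsto (iteratedDeriv k f₁) atTop (𝓝 0))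
    (ht2 : Tendsto (iteratedDeriv k f₂) atTop (𝓝 0))
    (hm1 : MonotoneOn (iteratedDeriv k f₁) (Set.Ici (0 : ℝ)))
    (hm2 : MonotoneOn (iteratedDeriv k f₂) (Set.Ici (0 : ℝ))) :
    ∀ x : ℝ, 0 ≤ x → f₁ x = f₂ x := by
  set ψ : ℝ → ℝ := f₁ - f₂ with hψ
  have hc : ContDiff ℝ k ψ := hd1.sub hd2
  have hper : ∀ x : ℝ, 0 ≤ x → ψ (x + 1) = ψ x := by
    intro x hx
    have := h1 x hx
    have := h2 x hx
    simp only [hψ, Pi.sub_apply]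
    linarith
  have hsub : iteratedDeriv k ψ = fun x => iteratedDeriv k f₁ x - iteratedDeriv k f₂ x := by
    funext x
    simp only [hψ, ← iteratedDerivWithin_univ]
    exact iteratedDerivWithin_sub (Set.mem_univ x) uniqueDiffOn_univ
      hd1.contDiffWithinAt hd2.contDiffWithinAt
  have ht : Tendsto (iteratedDeriv k ψ) atTop (𝓝 0) := by
    rw [hsub]
    simpa using ht1.sub ht2
  have := aux_periodic_zero k ψ hc hper ht
  intro x hx
  have h := this x hx
  simp only [hψ, Pi.sub_apply] at h
  linarith [h0]
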